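/- There is an absolute constant c > 0 such that for all n ≥ 3, sat(n, T_3^2) ≥ n + c·√n, where T_3^2 is the 3×3 matrix whose columns are the three length-3 columns with exactly two ones. -/

import Mathlib

/-- `F` is a submatrix of `M` (up to row/column permutations): there are injections
selecting rows and columns of `M` giving `F`. -/
def IsSubmatrix {α : Type*} {k c n m : ℕ} (F : Fin k → Fin c → α) (M : Fin n → Fin m → α) :
    Prop :=
  ∃ r : Fin k → Fin n, ∃ s : Fin c → Fin m,
    Function.Injective r ∧ Function.Injective s ∧ ∀ i j, M (r i) (s j) = F i j

/-- A matrix is simple if its columns are pairwise distinct. -/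
def Simple' {α : Type*} {n m : ℕ} (M : Fin n → Fin m → α) : Prop :=
  ∀ j₁ j₂ : Fin m, (∀ i, M i j₁ = M i j₂) → j₁ = j₂

/-- `C` occurs as a column of `M`. -/
def IsCol {α : Type*} {n m : ℕ} (M : Fin n → Fin m → α) (C : Fin n → α) : Prop :=
  ∃ j, ∀ i, M i j = C i

/-- The matrix `[M, C]` obtained by appending the column `C` to `M`. -/
def addCol {α : Type*} {n m : ℕ} (M : Fin n → Fin m → α) (C : Fin n → α) :
    Fin n → Fin (m + 1) → α :=
  fun i j => if h : (j : ℕ) < m then M i ⟨j, h⟩ else C i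

/-- `M` is `F`-saturated: simple, `F`-free, and adding any missing column creates `F`. -/
def Saturated {α : Type*} {k c n m : ℕ} (F : Fin k → Fin c → α) (M : Fin n → Fin m → α) :
    Prop :=
  Simple' M ∧ ¬ IsSubmatrix F M ∧
    ∀ C : Fin n → α, ¬ IsCol M C → IsSubmatrix F (addCol M C)

/-- The set of sizes (numbers of columns) of `F`-saturated `n`-row matrices. -/
def satSet {α : Type*} {k c : ℕ} (F : Fin k → Fin c → α) (n : ℕ) : Set ℕ :=
  {m | ∃ M : Fin n → Fin m → α, Saturated F M}

/-- The set of sizes of simple `F`-free `n`-row matrices. -/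
def forbSet {α : Type*} {k c : ℕ} (F : Fin k → Fin c → α) (n : ℕ) : Set ℕ :=
  {m | ∃ M : Fin n → Fin m → α, Simple' M ∧ ¬ IsSubmatrix F M}

/-- `K_k`: the `k × 2^k` 0-1 matrix of all distinct 0-1 columns of length `k`. -/
def Kfull (k : ℕ) : Fin k → Fin (2 ^ k) → Bool :=
  fun i j => Nat.testBit j.val i.val

def T32 : Fin 3 → Fin 3 → Bool :=
  ![![false, true, true], ![true, false, true], ![true, true, false]]

/-! ### Auxiliary set-family lemmas -/

open Finset

section FamilyLemmas
variable {α : Type*} [DecidableEq α]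

/-- Families avoiding the configuration with columns (1,0),(0,1),(1,1). -/
def DfreeFam (W : Finset (Finset α)) : Prop :=
  ∀ A ∈ W, ∀ B ∈ W, ∀ C ∈ W, ∀ a b : α,
    a ∈ A → a ∉ B → a ∈ C → b ∉ A → b ∈ B → b ∈ C → False

/-- Families avoiding the `T32` configuration. -/
def T32freeFam (W : Finset (Finset α)) : Prop :=
  ∀ A ∈ W, ∀ B ∈ W, ∀ C ∈ W, ∀ a b c : α,
    a ∉ A → a ∈ B → a ∈ C → b ∈ A → b ∉ B → b ∈ C → c ∈ A → c ∈ B → c ∉ C → False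

lemma Dfree_card (R : Finset α) (W : Finset (Finset α))
    (hsub : ∀ A ∈ W, A ⊆ R) (hfree : DfreeFam W) : W.card ≤ R.card + 1 := by
  classical
  set U : α → Finset (Finset α) := fun a => W.filter (fun B => a ∈ B) with hU
  have memU : ∀ a (B : Finset α), B ∈ U a ↔ B ∈ W ∧ a ∈ B := by
    intro a B; simp [hU]
  have chain : ∀ A ∈ W, ∀ a ∈ A, ∀ b ∈ A, U a ⊆ U b ∨ U b ⊆ U a := by
    intro A hA a ha b hb
    by_contra hc
    push_neg at hc
    obtain ⟨h1, h2⟩ := hc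
    rw [Finset.not_subset] at h1 h2
    obtain ⟨P, hPa, hPb⟩ := h1
    obtain ⟨Q, hQb, hQa⟩ := h2
    rw [memU] at hPa hQb
    have hPbW : b ∉ P := fun hb' => hPb ((memU b P).2 ⟨hPa.1, hb'⟩)
    have hQaW : a ∉ Q := fun ha' => hQa ((memU a Q).2 ⟨hQb.1, ha'⟩)
    exact hfree P hPa.1 Q hQb.1 A hA a b hPa.2 hQaW ha hPbW hQb.2 hb
  have key : ∀ A ∈ W, ∀ A' ∈ W, ∀ a : α,
      (a ∈ A ∧ ∀ b ∈ A, U a ⊆ U b) → (a ∈ A' ∧ ∀ b ∈ A', U a ⊆ U b) → A = A' := by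
    intro A hA A' hA' a ⟨haA, hminA⟩ ⟨haA', hminA'⟩
    apply Finset.Subset.antisymm
    · intro b hb
      have : A' ∈ U a := (memU a A').2 ⟨hA', haA'⟩
      exact ((memU b A').1 (hminA b hb this)).2
    · intro b hb
      have : A ∈ U a := (memU a A).2 ⟨hA, haA⟩
      exact ((memU b A).1 (hminA' b hb this)).2
  have exmin : ∀ A ∈ W, A.Nonempty → ∃ a, a ∈ A ∧ ∀ b ∈ A, U a ⊆ U b := by
    intro A hA hne
    obtain ⟨a, ha, hmin⟩ := Finset.exists_min_image A (fun a => (U a).card) hne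
    refine ⟨a, ha, fun b hb => ?_⟩
    rcases chain A hA a ha b hb with h | h
    · exact h
    · exact le_of_eq (Finset.eq_of_subset_of_card_le h (hmin b hb)).symm
  by_cases hne : (W.erase ∅).Nonempty
  · obtain ⟨A0, hA0⟩ := hne
    have hA0W : A0 ∈ W := Finset.mem_of_mem_erase hA0
    have hA0ne : A0.Nonempty := Finset.nonempty_iff_ne_empty.2 (Finset.ne_of_mem_erase hA0)
    obtain ⟨a0, ha0, _⟩ := exmin A0 hA0W hA0ne
    haveI : Nonempty α := ⟨a0⟩
    set g : Finset α → α := fun A =>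
      if h : ∃ a, a ∈ A ∧ ∀ b ∈ A, U a ⊆ U b then h.choose else Classical.arbitrary α with hg
    have hgspec : ∀ A ∈ W, A.Nonempty → g A ∈ A ∧ ∀ b ∈ A, U (g A) ⊆ U b := by
      intro A hA hAne
      have h : ∃ a, a ∈ A ∧ ∀ b ∈ A, U a ⊆ U b := exmin A hA hAne
      rw [hg]; simp only [dif_pos h]; exact h.choose_spec
    have hcard : (W.erase ∅).card ≤ R.card := by
      apply Finset.card_le_card_of_injOn g
      · intro A hA
        have hAW : A ∈ W := Finset.mem_of_mem_erase hA
        have hAne : A.Nonempty := Finset.nonempty_iff_ne_empty.2 (Finset.ne_of_mem_erase hA)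
        exact hsub A hAW ((hgspec A hAW hAne).1)
      · intro A hA A' hA' hgeq
        have hAW : A ∈ W := Finset.mem_of_mem_erase hA
        have hAne : A.Nonempty := Finset.nonempty_iff_ne_empty.2 (Finset.ne_of_mem_erase hA)
        have hA'W : A' ∈ W := Finset.mem_of_mem_erase hA'
        have hA'ne : A'.Nonempty := Finset.nonempty_iff_ne_empty.2 (Finset.ne_of_mem_erase hA')
        have s1 := hgspec A hAW hAne
        have s2 := hgspec A' hA'W hA'ne
        rw [hgeq] at s1
        exact key A hAW A' hA'W (g A') s1 s2
    calc W.card ≤ (W.erase ∅).card + 1 := by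
          by_cases h : ∅ ∈ W
          · rw [Finset.card_erase_add_one h]
          · rw [Finset.erase_eq_of_notMem h]; omega
      _ ≤ R.card + 1 := by omega
  · have : W ⊆ {∅} := by
      intro A hA
      rw [Finset.mem_singleton]
      by_contra hA'
      exact hne ⟨A, Finset.mem_erase.2 ⟨hA', hA⟩⟩
    have := Finset.card_le_card this
    simp only [Finset.card_singleton] at this
    omega

lemma T32free_card (R : Finset α) : ∀ (W : Finset (Finset α)),
    (∀ A ∈ W, A ⊆ R) → T32freeFam W → W.card ≤ R.card * R.card + 1 := by
  classical
  induction R using Finset.induction_on with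
  | empty =>
    intro W hsub _
    have : W ⊆ {∅} := by
      intro A hA
      rw [Finset.mem_singleton, ← Finset.subset_empty]
      exact hsub A hA
    have := Finset.card_le_card this
    simp only [Finset.card_singleton] at this
    omega
  | @insert x S hx ih =>
    intro W hsub hfree
    set W0 : Finset (Finset α) := W.filter (fun A => x ∉ A) with hW0
    set W1 : Finset (Finset α) := W.filter (fun A => x ∈ A) with hW1
    set W1' : Finset (Finset α) := W1.image (fun A => A.erase x) with hW1'
    set W' : Finset (Finset α) := W0 ∪ W1' with hW'
    set Brep : Finset (Finset α) := W0 ∩ W1' with hBrep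
    have himg : W1'.card = W1.card := by
      rw [hW1']
      apply Finset.card_image_of_injOn
      intro A hA B hB h
      have hxA : x ∈ A := (Finset.mem_filter.1 hA).2
      have hxB : x ∈ B := (Finset.mem_filter.1 hB).2
      simp only at h
      rw [← Finset.insert_erase hxA, ← Finset.insert_erase hxB, h]
    have hsplit : W0.card + W1.card = W.card := by
      have := Finset.card_filter_add_card_filter_not (s := W) (p := fun A => x ∈ A)
      simp only [← hW1] at this
      rw [hW0]
      omega
    have hcard : W.card = W'.card + Brep.card := by
      have := Finset.card_union_add_card_inter W0 W1'
      rw [← hW', ← hBrep] at this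
      omega
    have hpre : ∀ P ∈ W', ∃ Q ∈ W, P = Q.erase x := by
      intro P hP
      rcases Finset.mem_union.1 hP with h | h
      · have := Finset.mem_filter.1 h
        exact ⟨P, this.1, (Finset.erase_eq_of_notMem this.2).symm⟩
      · obtain ⟨Q, hQ, hQP⟩ := Finset.mem_image.1 h
        exact ⟨Q, (Finset.mem_filter.1 hQ).1, hQP.symm⟩
    have hsub' : ∀ A ∈ W', A ⊆ S := by
      intro A hA
      obtain ⟨Q, hQ, rfl⟩ := hpre A hA
      intro y hy
      have hy' := Finset.mem_erase.1 hy
      rcases Finset.mem_insert.1 (hsub Q hQ hy'.2) with h | h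
      · exact absurd h hy'.1
      · exact h
    have hfree' : T32freeFam W' := by
      intro A hA B hB C hC a b c ha1 ha2 ha3 hb1 hb2 hb3 hc1 hc2 hc3
      have hax : a ≠ x := fun h => hx (h ▸ hsub' _ hB ha2)
      have hbx : b ≠ x := fun h => hx (h ▸ hsub' _ hA hb1)
      have hcx : c ≠ x := fun h => hx (h ▸ hsub' _ hA hc1)
      obtain ⟨QA, hQA, rfl⟩ := hpre A hA
      obtain ⟨QB, hQB, rfl⟩ := hpre B hB
      obtain ⟨QC, hQC, rfl⟩ := hpre C hC
      exact hfree QA hQA QB hQB QC hQC a b c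
        (fun h => ha1 (Finset.mem_erase.2 ⟨hax, h⟩)) (Finset.mem_of_mem_erase ha2)
        (Finset.mem_of_mem_erase ha3) (Finset.mem_of_mem_erase hb1)
        (fun h => hb2 (Finset.mem_erase.2 ⟨hbx, h⟩)) (Finset.mem_of_mem_erase hb3)
        (Finset.mem_of_mem_erase hc1) (Finset.mem_of_mem_erase hc2)
        (fun h => hc3 (Finset.mem_erase.2 ⟨hcx, h⟩))
    have hcard' : W'.card ≤ S.card * S.card + 1 := ih W' hsub' hfree'
    have hrep : ∀ P ∈ Brep, P ∈ W ∧ insert x P ∈ W ∧ x ∉ P := by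
      intro P hP
      have h0 := Finset.mem_filter.1 (Finset.mem_inter.1 hP).1
      obtain ⟨Q, hQ, hQP⟩ := Finset.mem_image.1 (Finset.mem_inter.1 hP).2
      have hQ' := Finset.mem_filter.1 hQ
      refine ⟨h0.1, ?_, h0.2⟩
      rw [← hQP, Finset.insert_erase hQ'.2]
      exact hQ'.1
    have hsubB : ∀ A ∈ Brep, A ⊆ S := by
      intro A hA
      have h0 := Finset.mem_filter.1 (Finset.mem_inter.1 hA).1
      intro y hy
      rcases Finset.mem_insert.1 (hsub A h0.1 hy) with h | h
      · exact absurd (h ▸ hy) h0.2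
      · exact h
    have hfreeB : DfreeFam Brep := by
      intro A hA B hB C hC a b ha1 ha2 ha3 hb1 hb2 hb3
      have hax : a ≠ x := fun h => hx (h ▸ hsubB A hA ha1)
      have hbx : b ≠ x := fun h => hx (h ▸ hsubB B hB hb2)
      have hA' := hrep A hA
      have hB' := hrep B hB
      have hC' := hrep C hC
      exact hfree C hC'.1 (insert x A) hA'.2.1 (insert x B) hB'.2.1 x b a
        hC'.2.2 (Finset.mem_insert_self x A) (Finset.mem_insert_self x B)
        hb3 (fun h => (Finset.mem_insert.1 h).elim (fun h => hbx h) hb1)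
        (Finset.mem_insert_of_mem hb2)
        ha3 (Finset.mem_insert_of_mem ha1)
        (fun h => (Finset.mem_insert.1 h).elim (fun h => hax h) ha2)
    have hcardB : Brep.card ≤ S.card + 1 := Dfree_card S Brep hsubB hfreeB
    rw [Finset.card_insert_of_notMem hx]
    calc W.card = W'.card + Brep.card := hcard
      _ ≤ (S.card * S.card + 1) + (S.card + 1) := by omega
      _ ≤ (S.card + 1) * (S.card + 1) + 1 := by nlinarith [Nat.zero_le S.card]

end FamilyLemmas

/-! ### Matrix-side auxiliary lemmas -/

lemma T32_apply : ∀ i j : Fin 3, T32 i j = decide (i ≠ j) := by decide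

lemma extract_aux {n m : ℕ} {M : Fin n → Fin m → Bool} {C : Fin n → Bool}
    (hfree : ¬ IsSubmatrix T32 M) (hadd : IsSubmatrix T32 (addCol M C)) :
    ∃ (r : Fin 3 → Fin n) (j0 : Fin 3), Function.Injective r ∧
      (∀ i, C (r i) = T32 i j0) ∧
      ∀ j, j ≠ j0 → ∃ jm : Fin m, ∀ i, M (r i) jm = T32 i j := by
  obtain ⟨r, s, hr, hs, hM⟩ := hadd
  by_cases hall : ∀ j, (s j : ℕ) < m
  · exfalso
    apply hfree
    refine ⟨r, fun j => ⟨(s j : ℕ), hall j⟩, hr, ?_, ?_⟩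
    · intro j j' h
      apply hs
      simp only at h
      have h2 := congrArg Fin.val h
      simp only [Fin.val_mk] at h2
      exact Fin.ext h2
    · intro i j
      have := hM i j
      rwa [addCol, dif_pos (hall j)] at this
  · push_neg at hall
    obtain ⟨j0, hj0⟩ := hall
    have hj0m : (s j0 : ℕ) = m := by
      have := (s j0).isLt
      omega
    refine ⟨r, j0, hr, ?_, ?_⟩
    · intro i
      have := hM i j0
      rwa [addCol, dif_neg (by omega)] at this
    · intro j hj
      have hjm : (s j : ℕ) < m := by
        have := (s j).isLt
        rcases Nat.lt_or_ge (s j : ℕ) m with h | h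
        · exact h
        · exfalso
          exact hj (hs (Fin.ext (by omega)))
      refine ⟨⟨(s j : ℕ), hjm⟩, fun i => ?_⟩
      have := hM i j
      rwa [addCol, dif_pos hjm] at this

/-- weight of column j -/
def wtM {n m : ℕ} (M : Fin n → Fin m → Bool) (j : Fin m) : ℕ :=
  (Finset.univ.filter (fun i => M i j = true)).card

def midsM {n m : ℕ} (M : Fin n → Fin m → Bool) : Finset (Fin m) :=
  Finset.univ.filter (fun j => 2 ≤ wtM M j ∧ wtM M j ≤ n - 1)

def fM {n m : ℕ} (M : Fin n → Fin m → Bool) (a : Fin n) : Finset (Fin m) :=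
  (midsM M).filter (fun j => M a j = true)

lemma two_distinct (j0 : Fin 3) : ∃ i1 i2 : Fin 3, i1 ≠ i2 ∧ i1 ≠ j0 ∧ i2 ≠ j0 := by
  revert j0; decide

lemma colZero {n m : ℕ} {M : Fin n → Fin m → Bool}
    (hfree : ¬ IsSubmatrix T32 M)
    (hsat : ∀ C : Fin n → Bool, ¬ IsCol M C → IsSubmatrix T32 (addCol M C)) :
    IsCol M (fun _ => false) := by
  by_contra h
  obtain ⟨r, j0, hr, hC, _⟩ := extract_aux hfree (hsat _ h)
  obtain ⟨i1, i2, h12, h10, h20⟩ := two_distinct j0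
  have := hC i1
  rw [T32_apply] at this
  simp [h10] at this

lemma colOnes {n m : ℕ} {M : Fin n → Fin m → Bool}
    (hfree : ¬ IsSubmatrix T32 M)
    (hsat : ∀ C : Fin n → Bool, ¬ IsCol M C → IsSubmatrix T32 (addCol M C)) :
    IsCol M (fun _ => true) := by
  by_contra h
  obtain ⟨r, j0, hr, hC, _⟩ := extract_aux hfree (hsat _ h)
  have := hC j0
  rw [T32_apply] at this
  simp at this

lemma colUnit {n m : ℕ} {M : Fin n → Fin m → Bool}
    (hfree : ¬ IsSubmatrix T32 M)
    (hsat : ∀ C : Fin n → Bool, ¬ IsCol M C → IsSubmatrix T32 (addCol M C))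
    (a : Fin n) : IsCol M (fun i => decide (i = a)) := by
  by_contra h
  obtain ⟨r, j0, hr, hC, _⟩ := extract_aux hfree (hsat _ h)
  obtain ⟨i1, i2, h12, h10, h20⟩ := two_distinct j0
  have e1 := hC i1
  have e2 := hC i2
  rw [T32_apply] at e1 e2
  simp only [h10, h20, ne_eq, not_false_eq_true, decide_eq_true_eq] at e1 e2
  exact h12 (hr ((of_decide_eq_true e1).trans (of_decide_eq_true e2).symm))

lemma pairCol {n m : ℕ} {M : Fin n → Fin m → Bool} (hn : 3 ≤ n)
    (hfree : ¬ IsSubmatrix T32 M)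
    (hsat : ∀ C : Fin n → Bool, ¬ IsCol M C → IsSubmatrix T32 (addCol M C))
    (a b : Fin n) (hab : a ≠ b) (hsub : fM M a ⊆ fM M b) :
    ∃ j ∈ midsM M, ∀ i, M i j = decide (i = a ∨ i = b) := by
  classical
  set C : Fin n → Bool := fun i => decide (i = a ∨ i = b) with hCdef
  by_cases hcol : IsCol M C
  · obtain ⟨j, hj⟩ := hcol
    have hset : Finset.univ.filter (fun i => M i j = true) = {a, b} := by
      ext i
      simp only [Finset.mem_filter, Finset.mem_univ, true_and, Finset.mem_insert,
        Finset.mem_singleton, hj i, hCdef, decide_eq_true_eq]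
    have hwt : wtM M j = 2 := by
      rw [wtM, hset, Finset.card_insert_of_notMem (by simp [hab]), Finset.card_singleton]
    refine ⟨j, ?_, hj⟩
    rw [midsM]
    simp only [Finset.mem_filter, Finset.mem_univ, true_and, hwt]
    omega
  · exfalso
    obtain ⟨r, j0, hr, hC, hpart⟩ := extract_aux hfree (hsat _ hcol)
    obtain ⟨i1, i2, h12, h10, h20⟩ := two_distinct j0
    have hmem : ∀ i : Fin 3, i ≠ j0 → (r i = a ∨ r i = b) := by
      intro i hi
      have := hC i
      rw [T32_apply] at this
      simpa [hi, hCdef] using this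
    have hj0mem : ¬ (r j0 = a ∨ r j0 = b) := by
      have := hC j0
      rw [T32_apply] at this
      simpa [hCdef] using this
    obtain ⟨ia, ib, hiab, hia0, hib0, hra, hrb⟩ :
        ∃ ia ib : Fin 3, ia ≠ ib ∧ ia ≠ j0 ∧ ib ≠ j0 ∧ r ia = a ∧ r ib = b := by
      rcases hmem i1 h10 with h | h
      · rcases hmem i2 h20 with h' | h'
        · exact absurd (hr (h.trans h'.symm)) h12
        · exact ⟨i1, i2, h12, h10, h20, h, h'⟩
      · rcases hmem i2 h20 with h' | h'
        · exact ⟨i2, i1, Ne.symm h12, h20, h10, h', h⟩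
        · exact absurd (hr (h.trans h'.symm)) h12
    obtain ⟨jm, hjm⟩ := hpart ib hib0
    have hMa : M a jm = true := by
      have := hjm ia
      rw [T32_apply, hra] at this
      simpa [hiab] using this
    have hMb : M b jm = false := by
      have := hjm ib
      rw [T32_apply, hrb] at this
      simpa using this
    have hMx : M (r j0) jm = true := by
      have := hjm j0
      rw [T32_apply] at this
      simpa [Ne.symm hib0] using this
    have hax : a ≠ r j0 := fun h => hj0mem (Or.inl h.symm)
    have hjmmid : jm ∈ midsM M := by
      rw [midsM]
      simp only [Finset.mem_filter, Finset.mem_univ, true_and]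
      constructor
      · have hsub2 : ({a, r j0} : Finset (Fin n)) ⊆
            Finset.univ.filter (fun i => M i jm = true) := by
          intro i hi
          rcases Finset.mem_insert.1 hi with h | h
          · subst h; simp [hMa]
          · rw [Finset.mem_singleton] at h; subst h; simp [hMx]
        have := Finset.card_le_card hsub2
        rwa [Finset.card_insert_of_notMem (by simp [hax]), Finset.card_singleton] at this
      · have hsub3 : Finset.univ.filter (fun i => M i jm = true) ⊆ Finset.univ.erase b := by
          intro i hi
          simp only [Finset.mem_filter] at hi
          refine Finset.mem_erase.2 ⟨fun h => ?_, Finset.mem_univ i⟩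
          rw [h] at hi
          rw [hMb] at hi
          exact absurd hi.2 (by simp)
        have := Finset.card_le_card hsub3
        rwa [Finset.card_erase_of_mem (Finset.mem_univ b), Finset.card_univ,
          Fintype.card_fin] at this
    have hfa : jm ∈ fM M a := by
      rw [fM]; exact Finset.mem_filter.2 ⟨hjmmid, hMa⟩
    have hfb := hsub hfa
    rw [fM, Finset.mem_filter] at hfb
    rw [hMb] at hfb
    exact absurd hfb.2 (by simp)

lemma mul_pred_eq (c : ℕ) : c * (c - 1) = c * c - c := by
  cases c with
  | zero => simp
  | succ d => rw [Nat.succ_sub_one, Nat.mul_succ, Nat.add_sub_cancel]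

lemma sq_eq_mul_pred_add (c : ℕ) : c ^ 2 = c * (c - 1) + c := by
  cases c with
  | zero => simp
  | succ d => rw [Nat.succ_sub_one, pow_two, Nat.mul_succ]

lemma inj3 {β : Type*} {x y z : β} (h1 : x ≠ y) (h2 : x ≠ z) (h3 : y ≠ z) :
    Function.Injective ![x, y, z] := by
  intro i j h
  fin_cases i <;> fin_cases j <;> simp_all [Matrix.cons_val_zero, Matrix.cons_val_one]

set_option maxHeartbeats 1000000 in
theorem stmt_19 :
    ∃ c : ℝ, 0 < c ∧ ∀ n : ℕ, 3 ≤ n → ∀ m : ℕ, ∀ M : Fin n → Fin m → Bool,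
      Saturated T32 M → (n : ℝ) + c * Real.sqrt n ≤ m := by
  classical
  refine ⟨1/2, by norm_num, ?_⟩
  intro n hn m M hM
  obtain ⟨hsimple, hfree, hsat⟩ := hM
  set mids := midsM M with hmids
  set k := mids.card with hk
  -- Step 1 : m ≥ n + 2 + k
  have hm1 : n + 2 + k ≤ m := by
    set Z : Finset (Fin m) := Finset.univ.filter (fun j => wtM M j = 0) with hZ
    set Un : Finset (Fin m) := Finset.univ.filter (fun j => wtM M j = 1) with hUn
    set On : Finset (Fin m) := Finset.univ.filter (fun j => wtM M j = n) with hOn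
    have hZc : 1 ≤ Z.card := by
      obtain ⟨j, hj⟩ := colZero hfree hsat
      refine Finset.card_pos.2 ⟨j, ?_⟩
      rw [hZ]
      simp only [Finset.mem_coe, Finset.mem_filter, Finset.mem_univ, true_and]
      simp only [Finset.mem_filter, Finset.mem_univ, true_and, wtM]
      rw [Finset.card_eq_zero, Finset.filter_eq_empty_iff]
      intro i _
      simp [hj i]
    have hOnc : 1 ≤ On.card := by
      obtain ⟨j, hj⟩ := colOnes hfree hsat
      refine Finset.card_pos.2 ⟨j, ?_⟩
      rw [hOn]
      simp only [Finset.mem_coe, Finset.mem_filter, Finset.mem_univ, true_and]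
      simp only [Finset.mem_filter, Finset.mem_univ, true_and, wtM]
      have : Finset.univ.filter (fun i => M i j = true) = Finset.univ := by
        rw [Finset.filter_eq_self]
        intro i _
        simp [hj i]
      rw [this, Finset.card_univ, Fintype.card_fin]
    have hUnc : n ≤ Un.card := by
      have hu : ∀ a : Fin n, ∃ j : Fin m, ∀ i, M i j = decide (i = a) :=
        fun a => colUnit hfree hsat a
      set g : Fin n → Fin m := fun a => (hu a).choose with hg
      have hgs : ∀ a, ∀ i, M i (g a) = decide (i = a) := fun a => (hu a).choose_spec
      have : (Finset.univ : Finset (Fin n)).card ≤ Un.card := by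
        apply Finset.card_le_card_of_injOn g
        · intro a _
          rw [hUn]
          simp only [Finset.mem_coe, Finset.mem_filter, Finset.mem_univ, true_and]
          simp only [Finset.mem_filter, Finset.mem_univ, true_and, wtM]
          have : Finset.univ.filter (fun i => M i (g a) = true) = {a} := by
            ext i
            simp [hgs a i]
          rw [this, Finset.card_singleton]
        · intro a _ a' _ hga
          have h1 : M a (g a) = true := by simp [hgs a a]
          rw [hga] at h1
          rw [hgs a' a] at h1
          exact of_decide_eq_true h1
      rwa [Finset.card_univ, Fintype.card_fin] at this
    have hd1 : Disjoint Z Un := by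
      rw [Finset.disjoint_left]
      intro j h1 h2
      rw [hZ, Finset.mem_filter] at h1
      rw [hUn, Finset.mem_filter] at h2
      omega
    have hd2 : Disjoint (Z ∪ Un) On := by
      rw [Finset.disjoint_left]
      intro j h1 h2
      rw [hOn, Finset.mem_filter] at h2
      rcases Finset.mem_union.1 h1 with h | h
      · rw [hZ, Finset.mem_filter] at h; omega
      · rw [hUn, Finset.mem_filter] at h; omega
    have hd3 : Disjoint (Z ∪ Un ∪ On) mids := by
      rw [Finset.disjoint_left]
      intro j h1 h2
      rw [hmids, midsM, Finset.mem_filter] at h2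
      rcases Finset.mem_union.1 h1 with h | h
      · rcases Finset.mem_union.1 h with h' | h'
        · rw [hZ, Finset.mem_filter] at h'; omega
        · rw [hUn, Finset.mem_filter] at h'; omega
      · rw [hOn, Finset.mem_filter] at h; omega
    have hcup : (Z ∪ Un ∪ On ∪ mids).card = Z.card + Un.card + On.card + k := by
      rw [Finset.card_union_of_disjoint hd3, Finset.card_union_of_disjoint hd2,
        Finset.card_union_of_disjoint hd1, hk]
    have hle : (Z ∪ Un ∪ On ∪ mids).card ≤ m := by
      have := Finset.card_le_card (Finset.subset_univ (Z ∪ Un ∪ On ∪ mids))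
      rwa [Finset.card_univ, Fintype.card_fin] at this
    omega
  -- Step 2 : the family of row-traces
  set V : Finset (Finset (Fin m)) := Finset.univ.image (fM M) with hV
  have hsubV : ∀ A ∈ V, A ⊆ mids := by
    intro A hA
    obtain ⟨p, _, rfl⟩ := Finset.mem_image.1 hA
    rw [fM]
    exact Finset.filter_subset _ _
  have hfreeV : T32freeFam V := by
    intro A hA B hB C hC a b c ha1 ha2 ha3 hb1 hb2 hb3 hc1 hc2 hc3
    obtain ⟨p, _, rfl⟩ := Finset.mem_image.1 hA
    obtain ⟨q, _, rfl⟩ := Finset.mem_image.1 hB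
    obtain ⟨w, _, rfl⟩ := Finset.mem_image.1 hC
    have hamid : a ∈ mids := hsubV _ hB ha2
    have hbmid : b ∈ mids := hsubV _ hC hb3
    have hcmid : c ∈ mids := hsubV _ hA hc1
    have mem_f : ∀ (x : Fin n) (j : Fin m), j ∈ mids → (j ∈ fM M x ↔ M x j = true) := by
      intro x j hj
      rw [fM, Finset.mem_filter]
      exact ⟨fun h => h.2, fun h => ⟨hj, h⟩⟩
    have hpa : M p a = false := by
      cases h : M p a
      · rfl
      · exact absurd ((mem_f p a hamid).2 h) ha1
    have hqb : M q b = false := by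
      cases h : M q b
      · rfl
      · exact absurd ((mem_f q b hbmid).2 h) hb2
    have hwc : M w c = false := by
      cases h : M w c
      · rfl
      · exact absurd ((mem_f w c hcmid).2 h) hc3
    have hqa : M q a = true := (mem_f q a hamid).1 ha2
    have hwa : M w a = true := (mem_f w a hamid).1 ha3
    have hpb : M p b = true := (mem_f p b hbmid).1 hb1
    have hwb : M w b = true := (mem_f w b hbmid).1 hb3
    have hpc : M p c = true := (mem_f p c hcmid).1 hc1
    have hqc : M q c = true := (mem_f q c hcmid).1 hc2
    apply hfree
    have hpq : p ≠ q := by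
      intro h; rw [h, hqa] at hpa; exact Bool.noConfusion hpa
    have hpw : p ≠ w := by
      intro h; rw [← h, hpc] at hwc; exact Bool.noConfusion hwc
    have hqw : q ≠ w := by
      intro h; rw [← h, hqb] at hwb; exact Bool.noConfusion hwb
    have hab2 : a ≠ b := by
      intro h; rw [h, hqb] at hqa; exact Bool.noConfusion hqa
    have hac : a ≠ c := by
      intro h; rw [h, hwc] at hwa; exact Bool.noConfusion hwa
    have hbc : b ≠ c := by
      intro h; rw [h, hwc] at hwb; exact Bool.noConfusion hwb
    refine ⟨![p, q, w], ![a, b, c], inj3 hpq hpw hqw, inj3 hab2 hac hbc, ?_⟩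
    intro i j
    fin_cases i <;> fin_cases j <;>
      simp only [T32, Matrix.cons_val', Matrix.cons_val_zero, Matrix.cons_val_one,
        Matrix.head_cons, Matrix.head_fin_const, Matrix.cons_val_fin_one,
        Matrix.cons_val_two, Matrix.tail_cons] <;> assumption
  -- Step 3 : counting
  have hD : V.card ≤ k * k + 1 := T32free_card mids V hsubV hfreeV
  set cf : Finset (Fin m) → ℕ := fun A => (Finset.univ.filter (fun x => fM M x = A)).card
    with hcf
  have hsum : ∑ A ∈ V, cf A = n := by
    have := Finset.card_eq_sum_card_fiberwise
      (f := fM M) (s := Finset.univ) (t := V)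
      (fun x _ => Finset.mem_image_of_mem _ (Finset.mem_univ x))
    rw [Finset.card_univ, Fintype.card_fin] at this
    exact this.symm
  set Pord : Finset (Fin n × Fin n) :=
    (Finset.univ ×ˢ Finset.univ).filter
      (fun p => p.1 ≠ p.2 ∧ fM M p.1 = fM M p.2) with hPord
  -- each pair in Pord yields a weight-2 column
  have hwit : ∀ p ∈ Pord, ∃ j ∈ mids, ∀ i, M i j = decide (i = p.1 ∨ i = p.2) := by
    intro p hp
    rw [hPord, Finset.mem_filter] at hp
    exact pairCol hn hfree hsat p.1 p.2 hp.2.1 (le_of_eq hp.2.2)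
  have hm0 : 0 < m := by omega
  have hP2k : Pord.card ≤ 2 * k := by
    set phi : Fin n × Fin n → Fin m := fun p =>
      if h : ∃ j ∈ mids, ∀ i, M i j = decide (i = p.1 ∨ i = p.2)
      then h.choose else ⟨0, hm0⟩ with hphi
    have hphispec : ∀ p ∈ Pord, phi p ∈ mids ∧
        ∀ i, M i (phi p) = decide (i = p.1 ∨ i = p.2) := by
      intro p hp
      have h := hwit p hp
      rw [hphi]
      simp only [dif_pos h]
      obtain ⟨h1, h2⟩ := h.choose_spec
      exact ⟨h1, h2⟩
    have himg : Pord.image phi ⊆ mids := by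
      intro j hj
      obtain ⟨p, hp, rfl⟩ := Finset.mem_image.1 hj
      exact (hphispec p hp).1
    have hfib : ∀ j ∈ Pord.image phi, (Pord.filter (fun p => phi p = j)).card ≤ 2 := by
      intro j hj
      obtain ⟨p0, hp0, hpj⟩ := Finset.mem_image.1 hj
      have hp0ne : p0.1 ≠ p0.2 := ((Finset.mem_filter.1 hp0).2).1
      have hsubfib : Pord.filter (fun p => phi p = j) ⊆ {p0, (p0.2, p0.1)} := by
        intro q hq
        obtain ⟨hq1, hq2⟩ := Finset.mem_filter.1 hq
        have hqne : q.1 ≠ q.2 := ((Finset.mem_filter.1 hq1).2).1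
        have hq0 := (hphispec q hq1).2
        rw [hq2] at hq0
        have hp00 := (hphispec p0 hp0).2
        rw [hpj] at hp00
        have heq : ∀ i : Fin n, (i = q.1 ∨ i = q.2) ↔ (i = p0.1 ∨ i = p0.2) := by
          intro i
          constructor
          · intro h
            have : M i j = true := by rw [hq0 i]; exact decide_eq_true h
            rw [hp00 i] at this
            exact of_decide_eq_true this
          · intro h
            have : M i j = true := by rw [hp00 i]; exact decide_eq_true h
            rw [hq0 i] at this
            exact of_decide_eq_true this
        have h1 : q.1 = p0.1 ∨ q.1 = p0.2 := (heq q.1).1 (Or.inl rfl)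
        have h2 : q.2 = p0.1 ∨ q.2 = p0.2 := (heq q.2).1 (Or.inr rfl)
        rcases h1 with h1 | h1
        · have h2' : q.2 = p0.2 := by
            rcases h2 with h2 | h2
            · exact absurd (h1.trans h2.symm) hqne
            · exact h2
          have : q = p0 := Prod.ext h1 h2'
          simp [this]
        · have h2' : q.2 = p0.1 := by
            rcases h2 with h2 | h2
            · exact h2
            · exact absurd (h1.trans h2.symm) hqne
          have : q = (p0.2, p0.1) := Prod.ext h1 h2'
          simp [this]
      calc (Pord.filter (fun p => phi p = j)).card ≤ ({p0, (p0.2, p0.1)} :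
            Finset (Fin n × Fin n)).card := Finset.card_le_card hsubfib
        _ ≤ 2 := Finset.card_insert_le _ _ |>.trans (by simp)
    calc Pord.card ≤ 2 * (Pord.image phi).card :=
          Finset.card_le_mul_card_image Pord 2 hfib
      _ ≤ 2 * k := by
          have := Finset.card_le_card himg
          omega
  -- Pord splits along fibers of fM ∘ fst
  have hPsum : ∑ A ∈ V, cf A * (cf A - 1) = Pord.card := by
    have hfw : ∀ p ∈ Pord, fM M p.1 ∈ V :=
      fun p _ => Finset.mem_image_of_mem _ (Finset.mem_univ p.1)
    rw [Finset.card_eq_sum_card_fiberwise hfw]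
    apply Finset.sum_congr rfl
    intro A hA
    have hset : Pord.filter (fun p => fM M p.1 = A) =
        (Finset.univ.filter (fun x => fM M x = A)).offDiag := by
      ext p
      constructor
      · intro hp
        obtain ⟨hp1, hfa⟩ := Finset.mem_filter.1 hp
        rw [hPord] at hp1
        obtain ⟨_, hne, hff⟩ := Finset.mem_filter.1 hp1
        refine Finset.mem_offDiag.2 ⟨?_, ?_, hne⟩
        · exact Finset.mem_filter.2 ⟨Finset.mem_univ _, hfa⟩
        · exact Finset.mem_filter.2 ⟨Finset.mem_univ _, hff.symm.trans hfa⟩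
      · intro hp
        obtain ⟨h1, h2, h3⟩ := Finset.mem_offDiag.1 hp
        have hfa := (Finset.mem_filter.1 h1).2
        have hfb := (Finset.mem_filter.1 h2).2
        refine Finset.mem_filter.2 ⟨?_, hfa⟩
        rw [hPord]
        exact Finset.mem_filter.2 ⟨Finset.mem_product.2 ⟨Finset.mem_univ _, Finset.mem_univ _⟩,
          h3, hfa.trans hfb.symm⟩
    rw [hset, Finset.offDiag_card]
    rw [hcf]
    exact mul_pred_eq _
  have hsumsq : ∑ A ∈ V, (cf A) ^ 2 ≤ n + 2 * k := by
    have : ∀ A ∈ V, (cf A) ^ 2 = cf A * (cf A - 1) + cf A :=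
      fun A _ => sq_eq_mul_pred_add _
    rw [Finset.sum_congr rfl this, Finset.sum_add_distrib, hsum, hPsum]
    omega
  have hCS : (n : ℕ) ^ 2 ≤ V.card * (n + 2 * k) := by
    have hcs := sq_sum_le_card_mul_sum_sq (s := V) (f := fun A => (cf A : ℕ))
    rw [hsum] at hcs
    calc n ^ 2 ≤ V.card * ∑ A ∈ V, (cf A) ^ 2 := hcs
      _ ≤ V.card * (n + 2 * k) := Nat.mul_le_mul_left _ hsumsq
  have hfinal : (n : ℕ) ^ 2 ≤ (k * k + 1) * (n + 2 * k) :=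
    le_trans hCS (Nat.mul_le_mul_right _ hD)
  clear_value k
  -- deduce n ≤ (2k+4)^2 over the reals
  have hreal : (n : ℝ) ≤ ((2 * k + 4 : ℕ) : ℝ) ^ 2 := by
    by_contra hcon
    push_neg at hcon
    have hrf : ((n : ℝ)) ^ 2 ≤ ((k : ℝ) * k + 1) * (n + 2 * k) := by
      have := hfinal
      have h2 : ((n ^ 2 : ℕ) : ℝ) ≤ (((k * k + 1) * (n + 2 * k) : ℕ) : ℝ) :=
        Nat.cast_le.2 this
      push_cast at h2
      linarith
    have hk0 : (0 : ℝ) ≤ (k : ℝ) := Nat.cast_nonneg k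
    have hn0 : (0 : ℝ) < (n : ℝ) := by
      have : (0 : ℕ) < n := by omega
      exact_mod_cast this
    have hcon' : 4 * (k : ℝ) ^ 2 + 16 * k + 16 < n := by
      push_cast at hcon
      nlinarith [hcon]
    have h2k : 2 * (k : ℝ) ≤ (n : ℝ) := by nlinarith
    have hstep : ((n : ℝ)) ^ 2 ≤ ((k : ℝ) * k + 1) * (2 * n) := by
      have : ((k : ℝ) * k + 1) * (n + 2 * k) ≤ ((k : ℝ) * k + 1) * (2 * n) := by
        apply mul_le_mul_of_nonneg_left _ (by nlinarith)
        linarith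
      linarith
    have hx : (n : ℝ) ≤ 2 * ((k : ℝ) * k + 1) := by nlinarith
    nlinarith
  have hsqrt : Real.sqrt n ≤ (2 * k + 4 : ℕ) := by
    have h0 : (0 : ℝ) ≤ ((2 * k + 4 : ℕ) : ℝ) := Nat.cast_nonneg _
    calc Real.sqrt n ≤ Real.sqrt (((2 * k + 4 : ℕ) : ℝ) ^ 2) := Real.sqrt_le_sqrt hreal
      _ = ((2 * k + 4 : ℕ) : ℝ) := Real.sqrt_sq h0
  have hmr : (n : ℝ) + 2 + k ≤ (m : ℝ) := by
    have := hm1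
    exact_mod_cast this
  have : (1 : ℝ) / 2 * Real.sqrt n ≤ k + 2 := by
    have : ((2 * k + 4 : ℕ) : ℝ) = 2 * (k : ℝ) + 4 := by push_cast; ring
    rw [this] at hsqrt
    linarith
  linarith
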